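/- Let λ* = (λ₁*,…,λ₆*) ∈ ℝ⁶ satisfy λ₁* = λ₂* = λ₄* = λ₅* = 0 and λ₃* = λ₆* ≠ 0 (i.e. λ* is a nonzero point of the line I₁ ∩ I₂ ∩ I₃). Then the ideal of ℝ[λ₁,…,λ₆] generated by the Kapteyn–Bautin polynomials v₁, v₂, v₃, v₄ and the ideal generated by λ₁, λ₅(λ₃−λ₆), λ₂λ₄²(λ₃−λ₆), λ₂λ₄(λ₃−λ₆)² coincide locally at λ*. -/

import Mathlib

open MvPolynomial

/-- The multiplicative set of polynomials not vanishing at `p`, i.e. the complement of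
the maximal ideal of polynomials vanishing at `p`. -/
def nonVanishing (K : Type*) [Field K] (p : Fin 6 → K) :
    Submonoid (MvPolynomial (Fin 6) K) where
  carrier := {f | eval p f ≠ 0}
  mul_mem' := by
    intro a b ha hb
    simp only [Set.mem_setOf_eq, map_mul] at ha hb ⊢
    exact mul_ne_zero ha hb
  one_mem' := by simp

/-- Two ideals of `K[λ₁,…,λ₆]` coincide locally at `p` if their extensions to the
localization of the polynomial ring at the maximal ideal of polynomials vanishing at `p`
(equivalently, the localization inverting all polynomials not vanishing at `p`) are equal. -/
def coincideLocally (K : Type*) [Field K] (p : Fin 6 → K)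
    (I J : Ideal (MvPolynomial (Fin 6) K)) : Prop :=
  Ideal.map (algebraMap (MvPolynomial (Fin 6) K) (Localization (nonVanishing K p))) I =
  Ideal.map (algebraMap (MvPolynomial (Fin 6) K) (Localization (nonVanishing K p))) J

/-- The Bautin ideal of the Kapteyn normal form, generated by the Kapteyn–Bautin
polynomials `v₁ = λ₁`, `v₂ = λ₅(λ₃−λ₆)`, `v₃ = λ₂λ₄(λ₃−λ₆)(λ₄+5λ₃−5λ₆)`,
`v₄ = λ₂λ₄(λ₃−λ₆)²(λ₃λ₆−2λ₆²−λ₂²)`, where `X 0 = λ₁, …, X 5 = λ₆`. -/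
noncomputable def bautinIdeal (K : Type*) [Field K] : Ideal (MvPolynomial (Fin 6) K) :=
  Ideal.span {X 0, X 4 * (X 2 - X 5),
    X 1 * X 3 * (X 2 - X 5) * (X 3 + 5 * X 2 - 5 * X 5),
    X 1 * X 3 * (X 2 - X 5) ^ 2 * (X 2 * X 5 - 2 * X 5 ^ 2 - X 1 ^ 2)}

set_option maxHeartbeats 1000000 in
theorem stmt_12 (l1 l2 l3 l4 l5 l6 : ℝ)
    (h1 : l1 = 0) (h2 : l2 = 0) (h4 : l4 = 0) (h5 : l5 = 0)
    (h36 : l3 = l6) (h3 : l3 ≠ 0) :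
    coincideLocally ℝ ![l1, l2, l3, l4, l5, l6]
      (bautinIdeal ℝ)
      (Ideal.span {X 0, X 4 * (X 2 - X 5), X 1 * X 3 ^ 2 * (X 2 - X 5),
        X 1 * X 3 * (X 2 - X 5) ^ 2}) := by
  subst h1 h2 h4 h5 h36
  have hu : (X 2 * X 5 - 2 * X 5 ^ 2 - X 1 ^ 2 : MvPolynomial (Fin 6) ℝ) ∈
      nonVanishing ℝ ![0, 0, l3, 0, 0, l3] := by
    have h5v : (![0, 0, l3, 0, 0, l3] : Fin 6 → ℝ) 5 = l3 := rfl
    have h2v : (![0, 0, l3, 0, 0, l3] : Fin 6 → ℝ) 2 = l3 := rfl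
    have h1v : (![0, 0, l3, 0, 0, l3] : Fin 6 → ℝ) 1 = 0 := rfl
    show eval ![0, 0, l3, 0, 0, l3] (X 2 * X 5 - 2 * X 5 ^ 2 - X 1 ^ 2) ≠ 0
    simp only [map_sub, map_mul, map_pow, eval_X, map_ofNat, h5v, h2v, h1v]
    have hsq : l3 ^ 2 ≠ 0 := pow_ne_zero 2 h3
    intro h
    exact hsq (by linear_combination -h)
  have hunit := IsLocalization.map_units
    (Localization (nonVanishing ℝ ![0, 0, l3, 0, 0, l3]))
    (⟨_, hu⟩ : nonVanishing ℝ ![0, 0, l3, 0, 0, l3])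
  unfold coincideLocally bautinIdeal
  rw [Ideal.map_span, Ideal.map_span]
  simp only [Set.image_insert_eq, Set.image_singleton]
  set φ := algebraMap (MvPolynomial (Fin 6) ℝ)
    (Localization (nonVanishing ℝ ![0, 0, l3, 0, 0, l3])) with hφ
  obtain ⟨c, hc⟩ := hunit
  -- φ-level identities
  have e3 : φ (X 1 * X 3 * (X 2 - X 5) * (X 3 + 5 * X 2 - 5 * X 5)) =
      φ (X 1 * X 3 ^ 2 * (X 2 - X 5)) + φ 5 * φ (X 1 * X 3 * (X 2 - X 5) ^ 2) := by
    rw [← map_mul, ← map_add]; congr 1; ring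
  have e4 : φ (X 1 * X 3 * (X 2 - X 5) ^ 2 * (X 2 * X 5 - 2 * X 5 ^ 2 - X 1 ^ 2)) =
      φ (X 1 * X 3 * (X 2 - X 5) ^ 2) * φ (X 2 * X 5 - 2 * X 5 ^ 2 - X 1 ^ 2) := by
    rw [← map_mul]
  apply le_antisymm <;> rw [Ideal.span_le] <;>
    intro x hx <;>
    simp only [Set.mem_insert_iff, Set.mem_singleton_iff] at hx
  · rcases hx with rfl | rfl | rfl | rfl
    · exact Ideal.subset_span (by simp)
    · exact Ideal.subset_span (by simp)
    · rw [e3]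
      exact add_mem (Ideal.subset_span (by simp))
        (Ideal.mul_mem_left _ _ (Ideal.subset_span (by simp)))
    · rw [e4]
      exact Ideal.mul_mem_right _ _ (Ideal.subset_span (by simp))
  · have hw4S : φ (X 1 * X 3 * (X 2 - X 5) ^ 2) ∈ Ideal.span
        {φ (X 0), φ (X 4 * (X 2 - X 5)),
         φ (X 1 * X 3 * (X 2 - X 5) * (X 3 + 5 * X 2 - 5 * X 5)),
         φ (X 1 * X 3 * (X 2 - X 5) ^ 2 * (X 2 * X 5 - 2 * X 5 ^ 2 - X 1 ^ 2))} := by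
      have e4' : φ (X 1 * X 3 * (X 2 - X 5) ^ 2) =
          φ (X 1 * X 3 * (X 2 - X 5) ^ 2 * (X 2 * X 5 - 2 * X 5 ^ 2 - X 1 ^ 2)) * ↑c⁻¹ := by
        rw [e4, ← hc, Units.mul_inv_cancel_right]
      rw [e4']
      exact Ideal.mul_mem_right _ _ (Ideal.subset_span (by simp))
    rcases hx with rfl | rfl | rfl | rfl
    · exact Ideal.subset_span (by simp)
    · exact Ideal.subset_span (by simp)
    · have e3' : φ (X 1 * X 3 ^ 2 * (X 2 - X 5)) =
          φ (X 1 * X 3 * (X 2 - X 5) * (X 3 + 5 * X 2 - 5 * X 5)) -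
          φ 5 * φ (X 1 * X 3 * (X 2 - X 5) ^ 2) := by rw [e3]; ring
      rw [e3']
      exact sub_mem (Ideal.subset_span (by simp)) (Ideal.mul_mem_left _ _ hw4S)
    · exact hw4S
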